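/- Let p : E ⥤ B be a Grothendieck fibration between categories with terminal objects, preserving the terminal object, and let q : F ⥤ C be any functor. If a functor f : E ⥤ F sends every morphism inverted by p to a morphism inverted by q, then there exists a functor g : B ⥤ C, unique up to natural isomorphism, with a natural isomorphism q ∘ f ≅ g ∘ p. -/
import Mathlib


open CategoryTheory CategoryTheory.Limits

def StronglyCartesian {E B : Type*} [Category E] [Category B] (p : E ⥤ B)
    {x' x : E} (f : x' ⟶ x) : Prop :=
  ∀ {z : E} (g : z ⟶ x) (h : p.obj z ⟶ p.obj x'),
    p.map g = h ≫ p.map f → ∃! k : z ⟶ x', p.map k = h ∧ k ≫ f = g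

def GrothFibration {E B : Type*} [Category E] [Category B] (p : E ⥤ B) : Prop :=
  ∀ (x : E) {b : B} (h : b ⟶ p.obj x), ∃ (x' : E) (f : x' ⟶ x) (e : p.obj x' = b),
    StronglyCartesian p f ∧ p.map f = eqToHom e ≫ h

section Aux

variable {E B : Type*} [Category E] [Category B] [HasTerminal E]
variable (p : E ⥤ B) (hp : GrothFibration p) (ht : IsTerminal (p.obj (⊤_ E)))

noncomputable def liftObj (b : B) : E :=
  (hp (⊤_ E) (ht.from b)).choose

noncomputable def liftHom (b : B) : liftObj p hp ht b ⟶ ⊤_ E :=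
  (hp (⊤_ E) (ht.from b)).choose_spec.choose

lemma liftEq (b : B) : p.obj (liftObj p hp ht b) = b :=
  (hp (⊤_ E) (ht.from b)).choose_spec.choose_spec.choose

lemma liftCart (b : B) : StronglyCartesian p (liftHom p hp ht b) :=
  (hp (⊤_ E) (ht.from b)).choose_spec.choose_spec.choose_spec.1

lemma lift_hom_ext {b : B} {z : E} (k₁ k₂ : z ⟶ liftObj p hp ht b)
    (h : p.map k₁ = p.map k₂) : k₁ = k₂ := by
  obtain ⟨k, _, hu⟩ := liftCart p hp ht b (k₁ ≫ liftHom p hp ht b) (p.map k₁)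
    (p.map_comp _ _)
  have h1 := hu k₁ ⟨rfl, rfl⟩
  have h2 := hu k₂ ⟨h.symm, terminal.hom_ext _ _⟩
  rw [h1, h2]

lemma lift_exists {b b' : B} (h : b ⟶ b') :
    ∃ k : liftObj p hp ht b ⟶ liftObj p hp ht b',
      p.map k = eqToHom (liftEq p hp ht b) ≫ h ≫ eqToHom (liftEq p hp ht b').symm := by
  obtain ⟨k, ⟨hk, _⟩, _⟩ := liftCart p hp ht b' (liftHom p hp ht b)
    (eqToHom (liftEq p hp ht b) ≫ h ≫ eqToHom (liftEq p hp ht b').symm)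
    (ht.hom_ext _ _)
  exact ⟨k, hk⟩

noncomputable def liftMap {b b' : B} (h : b ⟶ b') :
    liftObj p hp ht b ⟶ liftObj p hp ht b' :=
  (lift_exists p hp ht h).choose

lemma liftMap_spec {b b' : B} (h : b ⟶ b') :
    p.map (liftMap p hp ht h) =
      eqToHom (liftEq p hp ht b) ≫ h ≫ eqToHom (liftEq p hp ht b').symm :=
  (lift_exists p hp ht h).choose_spec

noncomputable def liftFunctor : B ⥤ E where
  obj := liftObj p hp ht
  map h := liftMap p hp ht h
  map_id b := by
    apply lift_hom_ext p hp ht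
    rw [liftMap_spec]
    simp
  map_comp h h' := by
    apply lift_hom_ext p hp ht
    rw [liftMap_spec, p.map_comp, liftMap_spec, liftMap_spec]
    simp

lemma comp_exists (x : E) : ∃ k : x ⟶ liftObj p hp ht (p.obj x),
    p.map k = eqToHom (liftEq p hp ht (p.obj x)).symm := by
  obtain ⟨k, ⟨hk, _⟩, _⟩ := liftCart p hp ht (p.obj x) (terminal.from x)
    (eqToHom (liftEq p hp ht (p.obj x)).symm) (ht.hom_ext _ _)
  exact ⟨k, hk⟩

noncomputable def compHom (x : E) : x ⟶ liftObj p hp ht (p.obj x) :=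
  (comp_exists p hp ht x).choose

lemma compHom_spec (x : E) :
    p.map (compHom p hp ht x) = eqToHom (liftEq p hp ht (p.obj x)).symm :=
  (comp_exists p hp ht x).choose_spec

lemma compHom_natural {x y : E} (h : x ⟶ y) :
    h ≫ compHom p hp ht y = compHom p hp ht x ≫ liftMap p hp ht (p.map h) := by
  apply lift_hom_ext p hp ht
  rw [p.map_comp, p.map_comp, compHom_spec, compHom_spec, liftMap_spec]
  simp

end Aux

/-- A terminal-object-preserving Grothendieck fibration `p` is a localization at the
morphisms it inverts: any functor inverting those morphisms factors through `p`,
uniquely up to natural isomorphism. -/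
theorem pointed_fibration_universal_property {E B F C : Type*}
    [Category E] [Category B] [Category F] [Category C]
    [HasTerminal E] [HasTerminal B]
    (p : E ⥤ B) (hp : GrothFibration p) (ht : IsTerminal (p.obj (⊤_ E)))
    (q : F ⥤ C) (f : E ⥤ F)
    (hf : ∀ {a b : E} (h : a ⟶ b), IsIso (p.map h) → IsIso (q.map (f.map h))) :
    ∃ g : B ⥤ C, Nonempty (f ⋙ q ≅ p ⋙ g) ∧
      ∀ g' : B ⥤ C, Nonempty (f ⋙ q ≅ p ⋙ g') → Nonempty (g ≅ g') := by
  refine ⟨liftFunctor p hp ht ⋙ f ⋙ q, ⟨?_⟩, ?_⟩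
  · -- natural isomorphism f ⋙ q ≅ p ⋙ (liftFunctor ⋙ f ⋙ q)
    have hiso : ∀ x : E, IsIso (q.map (f.map (compHom p hp ht x))) := by
      intro x
      apply hf
      rw [compHom_spec]
      infer_instance
    refine NatIso.ofComponents (fun x => @asIso _ _ _ _ _ (hiso x)) ?_
    intro x y h
    dsimp [liftFunctor]
    rw [← q.map_comp, ← f.map_comp, ← q.map_comp, ← f.map_comp,
      compHom_natural p hp ht h]
  · rintro g' ⟨η⟩
    refine ⟨NatIso.ofComponents
      (fun b => η.app (liftObj p hp ht b) ≪≫ eqToIso (congrArg g'.obj (liftEq p hp ht b))) ?_⟩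
    intro b b' h
    dsimp [liftFunctor]
    have := η.hom.naturality (liftMap p hp ht h)
    dsimp at this
    rw [← Category.assoc, this, liftMap_spec]
    simp [eqToHom_map]
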